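/- Under the model y^{(j)} = F(m ∘ (W c^{(j)})), j = 0,...,N_c-1, the stacked coefficient vector c = (c^{(0)},...,c^{(N_c-1)}) lies in the nullspace of the block matrix A_N whose (j,j)-block is -(Σ_{ℓ≠j} Y^{(ℓ)}) and whose (j,ℓ)-block for ℓ≠j is Y^{(j)}, where Y^{(j)} = (y^{(j)}_{(ν-r) mod Λ_N})_{ν∈Λ_N, r∈Λ_L}. In particular A_N has a nontrivial nullspace whenever c ≠ 0. -/

import Mathlib

open Complex Matrix BigOperators Finset

noncomputable def omegaN (N : ℕ) : ℂ := Complex.exp (-2 * Real.pi * Complex.I / N)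

/-- ω_N raised to an exponent given modulo N. -/
noncomputable def eN (N : ℕ) (x : ZMod N) : ℂ := omegaN N ^ x.val

/-- The centered 2D DFT matrix F = (ω_N^{ν·n}) indexed by (ZMod N)², which
realizes the index set Λ_N = {-N/2,…,N/2-1}² with periodic wrapping. -/
noncomputable def dft2 (N : ℕ) [NeZero N] :
    Matrix (ZMod N × ZMod N) (ZMod N × ZMod N) ℂ :=
  Matrix.of fun ν n => eN N (ν.1 * n.1 + ν.2 * n.2)

/-- Centering map identifying Fin L with {-n,…,n} ⊂ ZMod N (L = 2n+1). -/
def cenM (N L : ℕ) (i : Fin L) : ZMod N := ((i : ℕ) : ZMod N) - (((L - 1) / 2 : ℕ) : ZMod N)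

/-- (W a)_x = Σ_{r ∈ Λ_L} a_r ω_N^{-r·x}, the trigonometric-polynomial model map. -/
noncomputable def Wmap (N L : ℕ) (a : Fin L × Fin L → ℂ) (x : ZMod N × ZMod N) : ℂ :=
  ∑ r : Fin L × Fin L, a r * eN N (-(cenM N L r.1 * x.1 + cenM N L r.2 * x.2))

/-- The cyclic-shift (block Hankel) matrix Y⁽ʲ⁾ = (y_{(ν-r) mod Λ_N}). -/
noncomputable def Yshift (N L : ℕ) (y : ZMod N × ZMod N → ℂ) :
    Matrix (ZMod N × ZMod N) (Fin L × Fin L) ℂ :=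
  Matrix.of fun ν r => y (ν.1 - cenM N L r.1, ν.2 - cenM N L r.2)

/-- The MOCCA matrix A_N with (j,j)-block -(Σ_{ℓ≠j} Y⁽ˡ⁾) and (j,ℓ)-block Y⁽ʲ⁾ for ℓ≠j. -/
noncomputable def moccaA (N L Nc : ℕ) (y : Fin Nc → ZMod N × ZMod N → ℂ) :
    Matrix (Fin Nc × (ZMod N × ZMod N)) (Fin Nc × (Fin L × Fin L)) ℂ :=
  Matrix.of fun p q =>
    if q.1 = p.1 then -(∑ ℓ ∈ Finset.univ.erase p.1, Yshift N L (y ℓ) p.2 q.2)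
    else Yshift N L (y p.1) p.2 q.2



lemma omegaN_pow_N (N : ℕ) [NeZero N] : omegaN N ^ N = 1 := by
  unfold omegaN
  rw [← Complex.exp_nat_mul]
  have hN : (N : ℂ) ≠ 0 := Nat.cast_ne_zero.mpr (NeZero.ne N)
  rw [show (N : ℂ) * (-2 * Real.pi * Complex.I / N) = -(2 * Real.pi * Complex.I) by
    field_simp]
  rw [Complex.exp_neg, Complex.exp_two_pi_mul_I, inv_one]

lemma eN_natCast (N : ℕ) [NeZero N] (k : ℕ) : eN N (k : ZMod N) = omegaN N ^ k := by
  unfold eN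
  rw [ZMod.val_natCast, ← pow_eq_pow_mod _ (omegaN_pow_N N)]

lemma eN_add (N : ℕ) [NeZero N] (a b : ZMod N) : eN N (a + b) = eN N a * eN N b := by
  have ha := ZMod.natCast_rightInverse (n := N) a
  have hb := ZMod.natCast_rightInverse (n := N) b
  rw [← ha, ← hb, ← Nat.cast_add, eN_natCast, eN_natCast, eN_natCast, pow_add]

lemma Yshift_expand (N L : ℕ) [NeZero N] (m : ZMod N × ZMod N → ℂ)
    (a b : Fin L × Fin L → ℂ) (ν : ZMod N × ZMod N) :
    (Yshift N L ((dft2 N).mulVec (fun x => m x * Wmap N L a x))).mulVec b ν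
      = ∑ r : Fin L × Fin L, ∑ x : ZMod N × ZMod N, ∑ s : Fin L × Fin L,
          (m x * (eN N (ν.1 * x.1 + ν.2 * x.2) *
            (eN N (-(cenM N L r.1 * x.1 + cenM N L r.2 * x.2)) *
             eN N (-(cenM N L s.1 * x.1 + cenM N L s.2 * x.2))))) * (b r * a s) := by
  simp only [Matrix.mulVec, dotProduct, Yshift, dft2, Wmap, Matrix.of_apply]
  refine Finset.sum_congr rfl fun r _ => ?_
  rw [Finset.sum_mul]
  refine Finset.sum_congr rfl fun x _ => ?_
  rw [Finset.mul_sum, Finset.mul_sum, Finset.sum_mul]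
  refine Finset.sum_congr rfl fun s _ => ?_
  have harg : ((ν.1 - cenM N L r.1) * x.1 + (ν.2 - cenM N L r.2) * x.2 : ZMod N)
      = (ν.1 * x.1 + ν.2 * x.2) + (-(cenM N L r.1 * x.1 + cenM N L r.2 * x.2)) := by ring
  rw [harg, eN_add]
  ring

lemma Yshift_key (N L : ℕ) [NeZero N] (m : ZMod N × ZMod N → ℂ)
    (a b : Fin L × Fin L → ℂ) :
    (Yshift N L ((dft2 N).mulVec (fun x => m x * Wmap N L a x))).mulVec b
      = (Yshift N L ((dft2 N).mulVec (fun x => m x * Wmap N L b x))).mulVec a := by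
  funext ν
  rw [Yshift_expand N L m a b ν, Yshift_expand N L m b a ν, Finset.sum_comm]
  conv_rhs => rw [Finset.sum_comm]
  refine Finset.sum_congr rfl fun x _ => ?_
  rw [Finset.sum_comm]
  refine Finset.sum_congr rfl fun p _ => Finset.sum_congr rfl fun q _ => ?_
  ring


/-- Under the model y⁽ʲ⁾ = F(m ∘ W c⁽ʲ⁾), the stacked coefficient vector c lies in the
nullspace of the MOCCA matrix A_N; in particular A_N has a nontrivial nullspace if c ≠ 0. -/
theorem stmt2 (N L n Nc : ℕ) [NeZero N] (hN : Even N) (hL : L = 2 * n + 1) (hLN : L < N)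
    (m : ZMod N × ZMod N → ℂ) (c : Fin Nc → Fin L × Fin L → ℂ)
    (y : Fin Nc → ZMod N × ZMod N → ℂ)
    (hmodel : ∀ j, y j = (dft2 N).mulVec (fun x => m x * Wmap N L (c j) x)) :
    (moccaA N L Nc y).mulVec (fun q => c q.1 q.2) = 0 ∧
      ((fun q : Fin Nc × (Fin L × Fin L) => c q.1 q.2) ≠ 0 →
        ∃ v : Fin Nc × (Fin L × Fin L) → ℂ, v ≠ 0 ∧ (moccaA N L Nc y).mulVec v = 0) := by
  have key : ∀ (ℓ j : Fin Nc) (ν : ZMod N × ZMod N),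
      ∑ r : Fin L × Fin L, Yshift N L (y ℓ) ν r * c j r
        = ∑ r : Fin L × Fin L, Yshift N L (y j) ν r * c ℓ r := by
    intro ℓ j ν
    have h := congrFun (Yshift_key N L m (c ℓ) (c j)) ν
    rw [← hmodel ℓ, ← hmodel j] at h
    simpa [Matrix.mulVec, dotProduct] using h
  have hnull : (moccaA N L Nc y).mulVec (fun q => c q.1 q.2) = 0 := by
    funext p
    obtain ⟨j, ν⟩ := p
    simp only [Matrix.mulVec, dotProduct, Pi.zero_apply]
    rw [Fintype.sum_prod_type]
    simp only [moccaA, Matrix.of_apply]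
    rw [← Finset.sum_erase_add _ _ (Finset.mem_univ j)]
    have h1 : ∑ ℓ ∈ Finset.univ.erase j, ∑ r : Fin L × Fin L,
        (if ℓ = j then -(∑ ℓ' ∈ Finset.univ.erase j, Yshift N L (y ℓ') ν r)
          else Yshift N L (y j) ν r) * c ℓ r
        = ∑ ℓ ∈ Finset.univ.erase j, ∑ r : Fin L × Fin L, Yshift N L (y j) ν r * c ℓ r := by
      refine Finset.sum_congr rfl fun ℓ hℓ => Finset.sum_congr rfl fun r _ => ?_
      rw [if_neg (Finset.ne_of_mem_erase hℓ)]
    have h2 : ∑ r : Fin L × Fin L,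
        (if j = j then -(∑ ℓ' ∈ Finset.univ.erase j, Yshift N L (y ℓ') ν r)
          else Yshift N L (y j) ν r) * c j r
        = -∑ ℓ ∈ Finset.univ.erase j, ∑ r : Fin L × Fin L, Yshift N L (y ℓ) ν r * c j r := by
      simp only [eq_self_iff_true, if_true, neg_mul, Finset.sum_neg_distrib, Finset.sum_mul]
      rw [Finset.sum_comm]
    rw [h1, h2,
      show ∑ ℓ ∈ Finset.univ.erase j, ∑ r : Fin L × Fin L, Yshift N L (y ℓ) ν r * c j r
          = ∑ ℓ ∈ Finset.univ.erase j, ∑ r : Fin L × Fin L, Yshift N L (y j) ν r * c ℓ r from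
        Finset.sum_congr rfl fun ℓ _ => key ℓ j ν]
    exact add_neg_cancel _
  exact ⟨hnull, fun hc => ⟨_, hc, hnull⟩⟩
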